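/- arXiv:1003.2081 — 10 statements merged into one kernel-verified Lean document; each statement's English description precedes it below -/
import Mathlib

section
/- The operation ⊕ on 𝒜 is neither commutative nor associative: in 𝒜 one has 1⊕(1⊕1) ≠ (1⊕1)⊕1, so that commutativity and associativity both fail already on the elements 1 and 1⊕1. -/
/-- The smallest congruence on the free magma on one generator containing
all instances of the medial law `(w⊕x)⊕(y⊕z) = (w⊕y)⊕(x⊕z)`. -/
inductive MedialRel : FreeMagma PUnit → FreeMagma PUnit → Prop
  | medial (w x y z : FreeMagma PUnit) :
      MedialRel ((w * x) * (y * z)) ((w * y) * (x * z))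
  | refl (a : FreeMagma PUnit) : MedialRel a a
  | symm {a b : FreeMagma PUnit} : MedialRel a b → MedialRel b a
  | trans {a b c : FreeMagma PUnit} : MedialRel a b → MedialRel b c → MedialRel a c
  | mul {a b c d : FreeMagma PUnit} :
      MedialRel a b → MedialRel c d → MedialRel (a * c) (b * d)

/-- The noncommutative natural numbers `𝒜 := M/∼`. -/
def NCN : Type := Quot MedialRel

/-- The induced binary operation `⊕` on `𝒜`. -/
def NCN.oplus : NCN → NCN → NCN :=
  Quot.map₂ (· * ·) (fun a _ _ h => MedialRel.mul (MedialRel.refl a) h)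
    (fun _ _ b h => MedialRel.mul h (MedialRel.refl b))

/-- The class of the generator `1` in `𝒜`. -/
def NCN.one : NCN := Quot.mk _ (FreeMagma.of PUnit.unit)

/-- Substitution multiplication on `M`: `a · b` is the image of `a` under the unique
magma homomorphism `M → M` sending the generator to `b`. -/
def FreeMagma.subMul (a b : FreeMagma PUnit) : FreeMagma PUnit :=
  (FreeMagma.lift fun _ => b) a

theorem MedialRel.subMul_left {a a' : FreeMagma PUnit} (b : FreeMagma PUnit)
    (h : MedialRel a a') : MedialRel (a.subMul b) (a'.subMul b) := by
  induction h with
  | medial w x y z =>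
      simp only [FreeMagma.subMul, map_mul]
      exact MedialRel.medial _ _ _ _
  | refl a => exact MedialRel.refl _
  | symm _ ih => exact MedialRel.symm ih
  | trans _ _ ih1 ih2 => exact MedialRel.trans ih1 ih2
  | mul _ _ ih1 ih2 =>
      simp only [FreeMagma.subMul, map_mul] at *
      exact MedialRel.mul ih1 ih2

theorem MedialRel.subMul_right (a : FreeMagma PUnit) {b b' : FreeMagma PUnit}
    (h : MedialRel b b') : MedialRel (a.subMul b) (a.subMul b') := by
  induction a with
  | ih1 u => simpa [FreeMagma.subMul] using h
  | ih2 x y ihx ihy =>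
      simp only [FreeMagma.subMul, map_mul] at *
      exact MedialRel.mul ihx ihy

/-- The induced multiplication on `𝒜`. -/
def NCN.mul : NCN → NCN → NCN :=
  Quot.map₂ FreeMagma.subMul (fun a _ _ h => MedialRel.subMul_right a h)
    (fun _ _ b h => MedialRel.subMul_left b h)

/-- Depth of the leftmost leaf, an invariant of `MedialRel`. -/
def leftDepth : FreeMagma PUnit → ℕ
  | .of _ => 0
  | .mul a _ => leftDepth a + 1

theorem leftDepth_eq {a b : FreeMagma PUnit} (h : MedialRel a b) :
    leftDepth a = leftDepth b := by
  induction h with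
  | medial w x y z => simp [leftDepth]
  | refl a => rfl
  | symm _ ih => exact ih.symm
  | trans _ _ ih1 ih2 => exact ih1.trans ih2
  | mul _ _ ih1 ih2 => simpa [leftDepth] using ih1

/-- `1⊕(1⊕1) ≠ (1⊕1)⊕1` in `𝒜`, so `⊕` is neither commutative
nor associative. -/
theorem ncn_oplus_not_comm_not_assoc :
    NCN.oplus NCN.one (NCN.oplus NCN.one NCN.one) ≠
        NCN.oplus (NCN.oplus NCN.one NCN.one) NCN.one ∧
      ¬ (∀ a b : NCN, NCN.oplus a b = NCN.oplus b a) ∧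
      ¬ (∀ a b c : NCN, NCN.oplus (NCN.oplus a b) c = NCN.oplus a (NCN.oplus b c)) := by
  have hne : NCN.oplus NCN.one (NCN.oplus NCN.one NCN.one) ≠
      NCN.oplus (NCN.oplus NCN.one NCN.one) NCN.one := by
    intro h
    have := congrArg (Quot.lift leftDepth fun _ _ h => leftDepth_eq h) h
    simp [NCN.oplus, NCN.one, Quot.map₂, leftDepth] at this
  exact ⟨hne, fun h => hne (h _ _), fun h => hne ((h _ _ _).symm)⟩
end

section
/- (Claim 3.2) The substitution multiplication descends to a well-defined operation on 𝒜 which is associative, and the class 1 of the generator is a two-sided unit: for all a, b, c ∈ 𝒜, (a·b)·c = a·(b·c), 1·a = a, and a·1 = a. -/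
theorem FreeMagma.subMul_assoc (a b c : FreeMagma PUnit) :
    (a.subMul b).subMul c = a.subMul (b.subMul c) := by
  induction a with
  | ih1 u => rfl
  | ih2 x y ihx ihy =>
      simp only [FreeMagma.subMul, map_mul] at *
      rw [ihx, ihy]

theorem FreeMagma.one_subMul (a : FreeMagma PUnit) :
    (FreeMagma.of PUnit.unit).subMul a = a := rfl

theorem FreeMagma.subMul_one (a : FreeMagma PUnit) :
    a.subMul (FreeMagma.of PUnit.unit) = a := by
  induction a with
  | ih1 u => rfl
  | ih2 x y ihx ihy =>
      simp only [FreeMagma.subMul, map_mul] at *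
      rw [ihx, ihy]

/-- Claim 3.2: substitution multiplication descends to a well-defined
operation on `𝒜` which is associative with two-sided unit `1`. -/
theorem ncn_mul_descends_assoc_unital :
    (∀ a b : FreeMagma PUnit,
        NCN.mul (Quot.mk MedialRel a) (Quot.mk MedialRel b) =
          Quot.mk MedialRel (a.subMul b)) ∧
      (∀ a b c : NCN, NCN.mul (NCN.mul a b) c = NCN.mul a (NCN.mul b c)) ∧
      (∀ a : NCN, NCN.mul NCN.one a = a) ∧
      (∀ a : NCN, NCN.mul a NCN.one = a) := by
  refine ⟨fun a b => rfl, ?_, ?_, ?_⟩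
  · intro a b c
    induction a using Quot.inductionOn with | _ a =>
    induction b using Quot.inductionOn with | _ b =>
    induction c using Quot.inductionOn with | _ c =>
    show Quot.mk _ _ = Quot.mk _ _
    rw [FreeMagma.subMul_assoc]
  · intro a
    induction a using Quot.inductionOn with | _ a =>
    rfl
  · intro a
    induction a using Quot.inductionOn with | _ a =>
    show Quot.mk _ _ = Quot.mk _ _
    rw [FreeMagma.subMul_one]
end

section
/- (Corollary 3.5, left distributivity) Multiplication in 𝒜 distributes over ⊕ from the left: for all a, b₁, b₂ ∈ 𝒜, a·(b₁⊕b₂) = (a·b₁) ⊕ (a·b₂). -/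
theorem MedialRel.subMul_distrib (a b1 b2 : FreeMagma PUnit) :
    MedialRel (a.subMul (b1 * b2)) ((a.subMul b1) * (a.subMul b2)) := by
  induction a with
  | ih1 u => exact MedialRel.refl _
  | ih2 x y ihx ihy =>
      simp only [FreeMagma.subMul, map_mul] at *
      exact MedialRel.trans (MedialRel.mul ihx ihy) (MedialRel.medial _ _ _ _)

/-- Corollary 3.5, left distributivity: multiplication in `𝒜`
distributes over `⊕` from the left. -/
theorem ncn_mul_left_distrib (a b1 b2 : NCN) :
    NCN.mul a (NCN.oplus b1 b2) = NCN.oplus (NCN.mul a b1) (NCN.mul a b2) := by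
  induction a using Quot.ind
  induction b1 using Quot.ind
  induction b2 using Quot.ind
  exact Quot.sound (MedialRel.subMul_distrib _ _ _)
end

section
/- (Lemma 3.4, for operations built from one medial binary operation) Let X be a type with a binary operation · satisfying the medial law (w·x)·(y·z) = (w·y)·(x·z) for all w, x, y, z ∈ X. Then any two operations on X obtained by composing · commute with one another: for every term s in the free magma on m generators, every term t in the free magma on n generators, and every array x : Fin m → Fin n → X, evaluating s at the values (evaluation of t at row i of x)_{i} equals evaluating t at the values (evaluation of s at column j of x)_{j}, where evaluation of a free-magma term at an assignment of its generators is the unique magma-homomorphic extension of that assignment. -/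
lemma lift_mul_pointwise {X : Type*} [Mul X]
    (hmed : ∀ w x y z : X, (w * x) * (y * z) = (w * y) * (x * z))
    {ι : Type*} (t : FreeMagma ι) (f g : ι → X) :
    FreeMagma.lift (fun j => f j * g j) t =
      FreeMagma.lift f t * FreeMagma.lift g t := by
  induction t with
  | ih1 a => simp
  | ih2 a b ha hb => simp only [map_mul, ha, hb]; exact hmed _ _ _ _

/-- Lemma 3.4, for operations built from one medial binary operation:
if the multiplication on `X` is medial, then any two operations on `X` built by
composing it (encoded as free-magma terms `s`, `t`, evaluated via `FreeMagma.lift`)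
commute with one another. -/
theorem medial_compositions_commute {X : Type*} [Mul X]
    (hmed : ∀ w x y z : X, (w * x) * (y * z) = (w * y) * (x * z))
    {m n : ℕ} (s : FreeMagma (Fin m)) (t : FreeMagma (Fin n))
    (x : Fin m → Fin n → X) :
    FreeMagma.lift (fun i => FreeMagma.lift (fun j => x i j) t) s =
      FreeMagma.lift (fun j => FreeMagma.lift (fun i => x i j) s) t := by
  induction s with
  | ih1 i => simp
  | ih2 a b ha hb =>
      simp only [map_mul, ha, hb]
      exact (lift_mul_pointwise hmed t _ _).symm
end

section
/- (Claim 4.3) Multiplication in 𝒜 is not cancellative: with 2 := 1⊕1, 3₁ := 1⊕2, 3₂ := 2⊕1, 4₁ := 2⊕2 in 𝒜, one has 2·((1⊕2)⊕(4₁⊕1)) = 2·((1⊕3₁)⊕(3₂⊕1)) in 𝒜, yet (1⊕2)⊕(4₁⊕1) ≠ (1⊕3₁)⊕(3₂⊕1) in 𝒜. -/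
/-- `2 := 1 ⊕ 1` in `𝒜`. -/
def NCN.two : NCN := NCN.oplus NCN.one NCN.one

/-- `3₁ := 1 ⊕ 2` in `𝒜`. -/
def NCN.three1 : NCN := NCN.oplus NCN.one NCN.two

/-- `3₂ := 2 ⊕ 1` in `𝒜`. -/
def NCN.three2 : NCN := NCN.oplus NCN.two NCN.one

/-- `4₁ := 2 ⊕ 2` in `𝒜`. -/
def NCN.four1 : NCN := NCN.oplus NCN.two NCN.two

def o : FreeMagma PUnit := FreeMagma.of PUnit.unit

theorem chainAB : MedialRel (((o * (o * o)) * (((o * o) * (o * o)) * o)) * ((o * (o * o)) * (((o * o) * (o * o)) * o))) (((o * (o * (o * o))) * (((o * o) * o) * o)) * ((o * (o * (o * o))) * (((o * o) * o) * o))) := by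
  have h0 : MedialRel (((o * (o * o)) * (((o * o) * (o * o)) * o)) * ((o * (o * o)) * (((o * o) * (o * o)) * o))) (((o * (o * o)) * (((o * o) * (o * o)) * o)) * ((o * ((o * o) * (o * o))) * ((o * o) * o))) :=
    (MedialRel.mul (MedialRel.refl _) (MedialRel.medial _ _ _ _))
  have h1 : MedialRel (((o * (o * o)) * (((o * o) * (o * o)) * o)) * ((o * ((o * o) * (o * o))) * ((o * o) * o))) (((o * (o * o)) * (o * ((o * o) * (o * o)))) * ((((o * o) * (o * o)) * o) * ((o * o) * o))) :=
    (MedialRel.medial _ _ _ _)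
  have h2 : MedialRel (((o * (o * o)) * (o * ((o * o) * (o * o)))) * ((((o * o) * (o * o)) * o) * ((o * o) * o))) (((o * o) * ((o * o) * ((o * o) * (o * o)))) * ((((o * o) * (o * o)) * o) * ((o * o) * o))) :=
    (MedialRel.mul (MedialRel.medial _ _ _ _) (MedialRel.refl _))
  have h3 : MedialRel (((o * o) * ((o * o) * ((o * o) * (o * o)))) * ((((o * o) * (o * o)) * o) * ((o * o) * o))) (((o * o) * ((o * (o * o)) * (o * (o * o)))) * ((((o * o) * (o * o)) * o) * ((o * o) * o))) :=
    (MedialRel.mul (MedialRel.mul (MedialRel.refl _) (MedialRel.medial _ _ _ _)) (MedialRel.refl _))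
  have h4 : MedialRel (((o * o) * ((o * (o * o)) * (o * (o * o)))) * ((((o * o) * (o * o)) * o) * ((o * o) * o))) (((o * (o * (o * o))) * (o * (o * (o * o)))) * ((((o * o) * (o * o)) * o) * ((o * o) * o))) :=
    (MedialRel.mul (MedialRel.medial _ _ _ _) (MedialRel.refl _))
  have h5 : MedialRel (((o * (o * (o * o))) * (o * (o * (o * o)))) * ((((o * o) * (o * o)) * o) * ((o * o) * o))) (((o * (o * (o * o))) * (o * (o * (o * o)))) * ((((o * o) * (o * o)) * (o * o)) * (o * o))) :=
    (MedialRel.mul (MedialRel.refl _) (MedialRel.medial _ _ _ _))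
  have h6 : MedialRel (((o * (o * (o * o))) * (o * (o * (o * o)))) * ((((o * o) * (o * o)) * (o * o)) * (o * o))) (((o * (o * (o * o))) * (o * (o * (o * o)))) * ((((o * o) * o) * ((o * o) * o)) * (o * o))) :=
    (MedialRel.mul (MedialRel.refl _) (MedialRel.mul (MedialRel.medial _ _ _ _) (MedialRel.refl _)))
  have h7 : MedialRel (((o * (o * (o * o))) * (o * (o * (o * o)))) * ((((o * o) * o) * ((o * o) * o)) * (o * o))) (((o * (o * (o * o))) * (o * (o * (o * o)))) * ((((o * o) * o) * o) * (((o * o) * o) * o))) :=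
    (MedialRel.mul (MedialRel.refl _) (MedialRel.medial _ _ _ _))
  have h8 : MedialRel (((o * (o * (o * o))) * (o * (o * (o * o)))) * ((((o * o) * o) * o) * (((o * o) * o) * o))) (((o * (o * (o * o))) * (((o * o) * o) * o)) * ((o * (o * (o * o))) * (((o * o) * o) * o))) :=
    (MedialRel.medial _ _ _ _)
  exact ((((((((h0.trans h1).trans h2).trans h3).trans h4).trans h5).trans h6).trans h7).trans h8)


def mop : Fin 5 → Fin 5 → Fin 5 :=
  fun i j => ![![0,0,0,0,0], ![0,0,0,0,1], ![0,0,0,0,1], ![0,2,0,0,1], ![0,3,3,3,2]] i j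

theorem mop_medial : ∀ w x y z : Fin 5, mop (mop w x) (mop y z) = mop (mop w y) (mop x z) := by
  decide

def mval : FreeMagma PUnit → Fin 5
  | FreeMagma.of _ => 4
  | FreeMagma.mul a b => mop (mval a) (mval b)

theorem mval_mul (a b : FreeMagma PUnit) : mval (a * b) = mop (mval a) (mval b) := rfl

theorem mval_eq {a b : FreeMagma PUnit} (h : MedialRel a b) : mval a = mval b := by
  induction h with
  | medial w x y z => simp only [mval_mul]; exact mop_medial _ _ _ _
  | refl a => rfl
  | symm _ ih => exact ih.symm
  | trans _ _ ih1 ih2 => exact ih1.trans ih2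
  | mul _ _ ih1 ih2 => simp only [mval_mul, ih1, ih2]

theorem medialRel_of_eqvGen {a b : FreeMagma PUnit}
    (h : Relation.EqvGen MedialRel a b) : MedialRel a b := by
  induction h with
  | rel _ _ h => exact h
  | refl _ => exact MedialRel.refl _
  | symm _ _ _ ih => exact MedialRel.symm ih
  | trans _ _ _ _ _ ih1 ih2 => exact MedialRel.trans ih1 ih2

/-- Claim 4.3: multiplication in `𝒜` is not cancellative:
`2·((1⊕2)⊕(4₁⊕1)) = 2·((1⊕3₁)⊕(3₂⊕1))` yet `(1⊕2)⊕(4₁⊕1) ≠ (1⊕3₁)⊕(3₂⊕1)`. -/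
theorem ncn_mul_not_cancellative :
    NCN.mul NCN.two
        (NCN.oplus (NCN.oplus NCN.one NCN.two) (NCN.oplus NCN.four1 NCN.one)) =
      NCN.mul NCN.two
        (NCN.oplus (NCN.oplus NCN.one NCN.three1) (NCN.oplus NCN.three2 NCN.one)) ∧
    NCN.oplus (NCN.oplus NCN.one NCN.two) (NCN.oplus NCN.four1 NCN.one) ≠
      NCN.oplus (NCN.oplus NCN.one NCN.three1) (NCN.oplus NCN.three2 NCN.one) := by
  constructor
  · exact Quot.sound chainAB
  · intro h
    have h2 : Relation.EqvGen MedialRel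
        ((o * (o * o)) * (((o * o) * (o * o)) * o))
        ((o * (o * (o * o))) * (((o * o) * o) * o)) := Quot.eqvGen_exact h
    have h3 := mval_eq (medialRel_of_eqvGen h2)
    exact absurd h3 (by decide)
end

section
/- (Claim 5.2) There exists a unique function ℓ : 𝒜 → ℤ[q] (integer polynomials in one variable q) satisfying ℓ(1) = 1 and ℓ(a⊕b) = ℓ(a) + q·ℓ(b) for all a, b ∈ 𝒜. -/

noncomputable def ellM : FreeMagma PUnit → Polynomial ℤ :=
  fun m => FreeMagma.recOnMul m (fun _ => 1) (fun _ _ p q => p + Polynomial.X * q)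

@[simp] theorem ellM_of (u : PUnit) : ellM (FreeMagma.of u) = 1 := rfl
@[simp] theorem ellM_mul (a b : FreeMagma PUnit) :
    ellM (a * b) = ellM a + Polynomial.X * ellM b := rfl

theorem ellM_resp {a b : FreeMagma PUnit} (h : MedialRel a b) : ellM a = ellM b := by
  induction h with
  | medial w x y z => simp only [ellM_mul]; ring
  | refl a => rfl
  | symm _ ih => exact ih.symm
  | trans _ _ ih1 ih2 => exact ih1.trans ih2
  | mul _ _ ih1 ih2 => simp only [ellM_mul, ih1, ih2]

/-- Claim 5.2: there is a unique function `ℓ : 𝒜 → ℤ[q]` with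
`ℓ(1) = 1` and `ℓ(a⊕b) = ℓ(a) + q·ℓ(b)`. -/
theorem ncn_exists_unique_ell :
    ∃! ell : NCN → Polynomial ℤ,
      ell NCN.one = 1 ∧
      ∀ a b : NCN, ell (NCN.oplus a b) = ell a + Polynomial.X * ell b := by
  refine ⟨Quot.lift ellM (fun a b h => ellM_resp h), ⟨rfl, ?_⟩, ?_⟩
  · intro a b
    induction a using Quot.ind
    induction b using Quot.ind
    rfl
  · rintro g ⟨h1, h2⟩
    funext a
    induction a using Quot.ind with
    | _ m =>
      induction m with
      | ih1 u => exact h1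
      | ih2 x y ihx ihy =>
          have : g (Quot.mk _ (x * y)) = g (Quot.mk _ x) + Polynomial.X * g (Quot.mk _ y) :=
            h2 (Quot.mk _ x) (Quot.mk _ y)
          simpa [ellM_mul, ihx, ihy] using this
end

section
/- (Claim 5.3) The function ℓ is multiplicative: ℓ(a·b) = ℓ(a)·ℓ(b) for all a, b ∈ 𝒜. -/
/-- Claim 5.3: the function `ℓ` is multiplicative. -/
theorem ncn_ell_multiplicative (ell : NCN → Polynomial ℤ)
    (hone : ell NCN.one = 1)
    (hoplus : ∀ a b : NCN, ell (NCN.oplus a b) = ell a + Polynomial.X * ell b) (a b : NCN) :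
    ell (NCN.mul a b) = ell a * ell b := by
  obtain ⟨a⟩ := a
  obtain ⟨b⟩ := b
  induction a with
  | ih1 u =>
      have : NCN.mul (Quot.mk _ (FreeMagma.of u)) (Quot.mk _ b) = Quot.mk _ b := by
        simp [NCN.mul, Quot.map₂, FreeMagma.subMul]
        exact rfl
      rw [this]
      have h1 : (Quot.mk MedialRel (FreeMagma.of u) : NCN) = NCN.one := rfl
      rw [h1, hone, one_mul]
  | ih2 x y ihx ihy =>
      have h1 : NCN.mul (Quot.mk _ (x * y)) (Quot.mk _ b) =
          NCN.oplus (NCN.mul (Quot.mk _ x) (Quot.mk _ b))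
            (NCN.mul (Quot.mk _ y) (Quot.mk _ b)) := by
        simp [NCN.mul, NCN.oplus, Quot.map₂, FreeMagma.subMul, map_mul]
        exact rfl
      have h2 : (Quot.mk MedialRel (x * y) : NCN) =
          NCN.oplus (Quot.mk _ x) (Quot.mk _ y) := rfl
      rw [h1, hoplus, ihx, ihy, h2, hoplus (Quot.mk _ x) (Quot.mk _ y)]
      ring
end

section
/- (§5.4) If ℓ(a) is irreducible as an element of the ring ℤ[q], then a is irreducible in 𝒜: a ≠ 1 and whenever a = b·c in 𝒜, one has b = 1 or c = 1. -/
lemma NCN.mk_mul (x y : FreeMagma PUnit) :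
    Quot.mk MedialRel (x * y) = NCN.oplus (Quot.mk _ x) (Quot.mk _ y) := rfl

lemma ell_eval_pos (ell : NCN → Polynomial ℤ)
    (hone : ell NCN.one = 1)
    (hoplus : ∀ a b : NCN, ell (NCN.oplus a b) = ell a + Polynomial.X * ell b) :
    ∀ m : FreeMagma PUnit, 1 ≤ (ell (Quot.mk MedialRel m)).eval 1 := by
  intro m
  induction m with
  | ih1 u =>
      have : Quot.mk MedialRel (FreeMagma.of u) = NCN.one := by cases u; rfl
      rw [this, hone]; simp
  | ih2 x y ihx ihy =>
      rw [NCN.mk_mul, hoplus (Quot.mk _ x) (Quot.mk _ y)]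
      simp only [Polynomial.eval_add, Polynomial.eval_mul, Polynomial.eval_X]
      linarith

lemma eq_one_of_isUnit (ell : NCN → Polynomial ℤ)
    (hone : ell NCN.one = 1)
    (hoplus : ∀ a b : NCN, ell (NCN.oplus a b) = ell a + Polynomial.X * ell b)
    (b : NCN) (hu : IsUnit (ell b)) : b = NCN.one := by
  obtain ⟨m, rfl⟩ := Quot.exists_rep b
  cases m with
  | of u => cases u; rfl
  | mul x y =>
      exfalso
      obtain ⟨r, hr, hC⟩ := Polynomial.isUnit_iff.mp hu
      have hev : (ell (Quot.mk MedialRel (x * y))).eval 1 = r := by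
        rw [show ell (Quot.mk MedialRel (x * y)) = Polynomial.C r from hC.symm]; simp
      have h2 : 2 ≤ (ell (Quot.mk MedialRel (x * y))).eval 1 := by
        rw [NCN.mk_mul, hoplus (Quot.mk _ x) (Quot.mk _ y)]
        simp only [Polynomial.eval_add, Polynomial.eval_mul, Polynomial.eval_X]
        have := ell_eval_pos ell hone hoplus x
        have := ell_eval_pos ell hone hoplus y
        linarith
      rcases Int.isUnit_iff.mp hr with h | h <;> omega

lemma ell_mul (ell : NCN → Polynomial ℤ)
    (hone : ell NCN.one = 1)
    (hoplus : ∀ a b : NCN, ell (NCN.oplus a b) = ell a + Polynomial.X * ell b)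
    (b c : NCN) : ell (NCN.mul b c) = ell b * ell c := by
  obtain ⟨m, rfl⟩ := Quot.exists_rep b
  obtain ⟨n, rfl⟩ := Quot.exists_rep c
  have key : ∀ m : FreeMagma PUnit,
      ell (Quot.mk MedialRel (m.subMul n)) =
        ell (Quot.mk MedialRel m) * ell (Quot.mk MedialRel n) := by
    intro m
    induction m with
    | ih1 u =>
        have h1 : (FreeMagma.of u).subMul n = n := by simp [FreeMagma.subMul]
        have h2 : Quot.mk MedialRel (FreeMagma.of u) = NCN.one := by cases u; rfl
        rw [h1, h2, hone, one_mul]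
    | ih2 x y ihx ihy =>
        have h1 : (x * y).subMul n = x.subMul n * y.subMul n := by
          simp [FreeMagma.subMul, map_mul]
        rw [h1, NCN.mk_mul, hoplus (Quot.mk _ (x.subMul n)) (Quot.mk _ (y.subMul n)), ihx, ihy, NCN.mk_mul,
          hoplus (Quot.mk _ x) (Quot.mk _ y)]
        ring
  exact key m

/-- §5.4: if `ℓ(a)` is irreducible in `ℤ[q]` then `a` is irreducible
in `𝒜`. -/
theorem ncn_irreducible_of_ell_irreducible (ell : NCN → Polynomial ℤ)
    (hone : ell NCN.one = 1)
    (hoplus : ∀ a b : NCN, ell (NCN.oplus a b) = ell a + Polynomial.X * ell b) (a : NCN)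
    (hirr : Irreducible (ell a)) :
    a ≠ NCN.one ∧ ∀ b c : NCN, a = NCN.mul b c → b = NCN.one ∨ c = NCN.one := by
  constructor
  · rintro rfl
    rw [hone] at hirr
    exact hirr.not_isUnit isUnit_one
  · intro b c habc
    have := ell_mul ell hone hoplus b c
    rw [← habc] at this
    rcases hirr.isUnit_or_isUnit this with h | h
    · exact Or.inl (eq_one_of_isUnit ell hone hoplus b h)
    · exact Or.inr (eq_one_of_isUnit ell hone hoplus c h)
end

section
/- (§5.4, ℓ is not injective) With 2 := 1⊕1 and 3₁ := 1⊕2 in 𝒜, one has ℓ(2⊕2) = 1 + 2q + q² = ℓ(3₁⊕1) in ℤ[q], yet 2⊕2 ≠ 3₁⊕1 in 𝒜. -/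
/-- Depth of a tree in the free magma. -/
def FreeMagma.dep : FreeMagma PUnit → ℕ
  | .of _ => 0
  | .mul a b => max a.dep b.dep + 1

theorem MedialRel.dep_eq {a b : FreeMagma PUnit} (h : MedialRel a b) :
    a.dep = b.dep := by
  induction h with
  | medial w x y z => simp only [FreeMagma.dep]; omega
  | refl a => rfl
  | symm _ ih => omega
  | trans _ _ ih1 ih2 => omega
  | mul _ _ ih1 ih2 => simp only [FreeMagma.dep]; omega

/-- Depth descends to the quotient. -/
def NCN.dep : NCN → ℕ := Quot.lift FreeMagma.dep fun _ _ h => h.dep_eq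

/-- §5.4, `ℓ` is not injective:
`ℓ(2⊕2) = 1 + 2q + q² = ℓ(3₁⊕1)` yet `2⊕2 ≠ 3₁⊕1` in `𝒜`. -/
theorem ncn_ell_not_injective (ell : NCN → Polynomial ℤ)
    (hone : ell NCN.one = 1)
    (hoplus : ∀ a b : NCN, ell (NCN.oplus a b) = ell a + Polynomial.X * ell b) :
    ell (NCN.oplus NCN.two NCN.two) = 1 + 2 * Polynomial.X + Polynomial.X ^ 2 ∧
    ell (NCN.oplus NCN.three1 NCN.one) = 1 + 2 * Polynomial.X + Polynomial.X ^ 2 ∧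
    NCN.oplus NCN.two NCN.two ≠ NCN.oplus NCN.three1 NCN.one := by
  refine ⟨?_, ?_, ?_⟩
  · simp only [NCN.two, hoplus, hone]; ring
  · simp only [NCN.three1, NCN.two, hoplus, hone]; ring
  · intro h
    have h2 : NCN.dep (NCN.oplus NCN.two NCN.two) = 2 := rfl
    have h3 : NCN.dep (NCN.oplus NCN.three1 NCN.one) = 3 := rfl
    rw [h, h3] at h2
    exact absurd h2 (by norm_num)
end

section
/- (Definition/Claim 5.5) There exists a unique function ℓₐ : 𝒜 → ℤ[q] satisfying ℓₐ(1) = 1 and ℓₐ(a⊕b) = (1+q)·ℓₐ(a) + (1−q)·ℓₐ(b) for all a, b ∈ 𝒜, and this function is multiplicative: ℓₐ(a·b) = ℓₐ(a)·ℓₐ(b) for all a, b ∈ 𝒜. -/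
noncomputable def ellF : FreeMagma PUnit → Polynomial ℤ :=
  FreeMagma.rec (fun _ => 1)
    (fun _ _ pa pb => (1 + Polynomial.X) * pa + (1 - Polynomial.X) * pb)

theorem ellF_of (u : PUnit) : ellF (FreeMagma.of u) = 1 := rfl

theorem ellF_mul (a b : FreeMagma PUnit) :
    ellF (a * b) = (1 + Polynomial.X) * ellF a + (1 - Polynomial.X) * ellF b := rfl

theorem ellF_resp {a b : FreeMagma PUnit} (h : MedialRel a b) : ellF a = ellF b := by
  induction h with
  | medial w x y z => simp only [ellF_mul]; ring
  | refl a => rfl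
  | symm _ ih => exact ih.symm
  | trans _ _ ih1 ih2 => exact ih1.trans ih2
  | mul _ _ ih1 ih2 => simp only [ellF_mul, ih1, ih2]

noncomputable def ellQ : NCN → Polynomial ℤ := Quot.lift ellF (fun _ _ h => ellF_resp h)

/-- Definition/Claim 5.5: there is a unique function `ℓₐ : 𝒜 → ℤ[q]`
with `ℓₐ(1) = 1` and `ℓₐ(a⊕b) = (1+q)·ℓₐ(a) + (1−q)·ℓₐ(b)`, and it is multiplicative. -/
theorem ncn_exists_unique_ell_a_and_multiplicative :
    (∃! ella : NCN → Polynomial ℤ,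
        ella NCN.one = 1 ∧
        ∀ a b : NCN, ella (NCN.oplus a b) =
          (1 + Polynomial.X) * ella a + (1 - Polynomial.X) * ella b) ∧
    (∀ ella : NCN → Polynomial ℤ,
        (ella NCN.one = 1 ∧
          ∀ a b : NCN, ella (NCN.oplus a b) =
            (1 + Polynomial.X) * ella a + (1 - Polynomial.X) * ella b) →
        ∀ a b : NCN, ella (NCN.mul a b) = ella a * ella b) := by
  have hmk : ∀ a b : FreeMagma PUnit,
      NCN.oplus (Quot.mk _ a) (Quot.mk _ b) = Quot.mk _ (a * b) := fun _ _ => rfl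
  have huniq : ∀ ella : NCN → Polynomial ℤ,
      (ella NCN.one = 1 ∧
        ∀ a b : NCN, ella (NCN.oplus a b) =
          (1 + Polynomial.X) * ella a + (1 - Polynomial.X) * ella b) →
      ∀ m : FreeMagma PUnit, ella (Quot.mk _ m) = ellF m := by
    intro ella ⟨h1, h2⟩ m
    induction m with
    | ih1 u => exact h1
    | ih2 x y ihx ihy =>
        have := h2 (Quot.mk _ x) (Quot.mk _ y)
        rw [hmk] at this
        rw [this, ihx, ihy, ellF_mul]
  constructor
  · refine ⟨ellQ, ⟨rfl, ?_⟩, ?_⟩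
    · intro a b
      induction a using Quot.ind with | _ a =>
      induction b using Quot.ind with | _ b =>
      rw [hmk]
      exact ellF_mul a b
    · intro ella h
      funext a
      induction a using Quot.ind with | _ m =>
      exact huniq ella h m
  · intro ella h a b
    induction a using Quot.ind with | _ a =>
    induction b using Quot.ind with | _ b =>
    have hm : ∀ a : FreeMagma PUnit, ellF (a.subMul b) = ellF a * ellF b := by
      intro a
      induction a with
      | ih1 u => simp [FreeMagma.subMul, ellF_of]
      | ih2 x y ihx ihy =>
          have hs : (x * y).subMul b = x.subMul b * y.subMul b := by
            simp [FreeMagma.subMul, map_mul]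
          rw [hs, ellF_mul, ihx, ihy, ellF_mul]
          ring
    have hq : ∀ m : FreeMagma PUnit, ella (Quot.mk _ m) = ellF m := huniq ella h
    show ella (Quot.mk _ (a.subMul b)) = _
    rw [hq, hq, hq, hm]
end
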